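/- Let W = M(c,h) be a Virasoro Verma module in a Feigin–Fuchs block of type (a), (b) or (c), W_2 = M(c,h_1) the submodule generated by a singular vector s_{h_1} of level N, and π_{W_2}: W → W_2 the projection along W_1. Then for every w ∈ W and every integer m ≥ 2, π_{W_2}(L(-m)w) = L(-m)π_{W_2}(w). -/

import Mathlib

open scoped BigOperators

noncomputable section

/-- A representation of the Virasoro algebra on a `ℂ`-vector space `M`, with the
central element `k` acting by the scalar `cc`. -/
structure VirRep (M : Type) [AddCommGroup M] [Module ℂ M] : Type where
  L : ℤ → M → M
  cc : ℂ
  L_linear : ∀ n : ℤ, IsLinearMap ℂ (L n)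
  comm : ∀ (m n : ℤ) (x : M),
    L m (L n x) - L n (L m x) =
      ((m - n : ℤ) : ℂ) • L (m + n) x +
        (if m + n = 0 then ((m ^ 3 - m : ℤ) : ℂ) / 12 * cc else 0) • x

/-- Index of the standard PBW monomials `L(-p₁)⋯L(-p_t)L(-1)^q 𝟙` of a Verma module:
a weakly decreasing list of integers `≥ 2` together with the exponent `q` of `L(-1)`. -/
def VirIdx : Type := {l : List ℕ // l.Chain' (· ≥ ·) ∧ ∀ a ∈ l, 2 ≤ a} × ℕ

/-- The level of a monomial index. -/
def VirIdx.level (i : VirIdx) : ℕ := i.1.1.sum + i.2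

/-- The monomial index of `L(-1)^q 𝟙`. -/
def VirIdx.pure (q : ℕ) : VirIdx := (⟨[], List.IsChain.nil, by simp⟩, q)

/-- The monomial `L(-p₁)⋯L(-p_t)L(-1)^q v`. -/
def VirRep.monomial {M : Type} [AddCommGroup M] [Module ℂ M] (R : VirRep M) (v : M)
    (i : VirIdx) : M :=
  i.1.1.foldr (fun a acc => R.L (-(a : ℤ)) acc) ((fun x => R.L (-1) x)^[i.2] v)

/-- The Verma module `M(c,h)` for the Virasoro algebra: a representation with central
charge `c` and a highest-weight vector `hw` of weight `h` annihilated by the positive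
part, such that the standard monomials form a basis. -/
structure VirVerma (M : Type) [AddCommGroup M] [Module ℂ M] (c h : ℂ)
    extends VirRep M : Type where
  cc_eq : cc = c
  hw : M
  hw_L0 : L 0 hw = h • hw
  hw_sing : ∀ n : ℤ, 0 < n → L n hw = 0
  bas : Module.Basis VirIdx ℂ M
  bas_eq : ∀ i : VirIdx, bas i = toVirRep.monomial hw i

/-- The index `Ind(w)` of `w` (Definition 5.3 of the paper): the largest exponent `q`
of `L(-1)` occurring in the standard expression of `w`, with `Ind 0 = -1`. -/
def VirVerma.Ind {M : Type} [AddCommGroup M] [Module ℂ M] {c h : ℂ}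
    (Vm : VirVerma M c h) (w : M) : ℤ :=
  (((Vm.bas.repr w).support.image (fun i : VirIdx => (i.2 : ℤ))).max).unbotD (-1)

/-- A singular vector: annihilated by `L(n)` for all `n > 0`. -/
def IsSingular {M : Type} [AddCommGroup M] [Module ℂ M] (R : VirRep M) (w : M) : Prop :=
  ∀ n : ℤ, 0 < n → R.L n w = 0

/-- Stability of a subspace under the Virasoro action. -/
def VirInvariant {M : Type} [AddCommGroup M] [Module ℂ M] (R : VirRep M)
    (S : Submodule ℂ M) : Prop :=
  ∀ (n : ℤ) (x : M), x ∈ S → R.L n x ∈ S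

/-- The Vir-submodule generated by a subset. -/
def VirGen {M : Type} [AddCommGroup M] [Module ℂ M] (R : VirRep M) (s : Set M) :
    Submodule ℂ M :=
  sInf {U : Submodule ℂ M | VirInvariant R U ∧ s ⊆ U}

namespace VirAux

variable {M : Type} [AddCommGroup M] [Module ℂ M]

def applyList (R : VirRep M) (l : List ℕ) (x : M) : M :=
  l.foldr (fun a acc => R.L (-(a : ℤ)) acc) x

lemma applyList_cons (R : VirRep M) (a : ℕ) (l : List ℕ) (x : M) :
    applyList R (a :: l) x = R.L (-(a : ℤ)) (applyList R l x) := rfl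

lemma applyList_append (R : VirRep M) (u t : List ℕ) (x : M) :
    applyList R (u ++ t) x = applyList R u (applyList R t x) := by
  simp [applyList, List.foldr_append]

lemma applyList_add (R : VirRep M) (l : List ℕ) (x y : M) :
    applyList R l (x + y) = applyList R l x + applyList R l y := by
  induction l with
  | nil => rfl
  | cons a t ih => simp [applyList_cons, ih, (R.L_linear _).map_add]

lemma applyList_smul (R : VirRep M) (l : List ℕ) (cc : ℂ) (x : M) :
    applyList R l (cc • x) = cc • applyList R l x := by
  induction l with
  | nil => rfl
  | cons a t ih => simp [applyList_cons, ih, (R.L_linear _).map_smul]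

def mu : List ℕ → ℕ
  | [] => 0
  | a :: t => a + t.sum + mu t

lemma mu_cons (a : ℕ) (t : List ℕ) : mu (a :: t) = a + t.sum + mu t := rfl

lemma mu_append (u t : List ℕ) : mu (u ++ t) = mu u + u.length * t.sum + mu t := by
  induction u with
  | nil => simp [mu]
  | cons a u ih =>
    rw [List.cons_append, mu_cons, mu_cons, ih, List.sum_append, List.length_cons]
    ring

lemma exists_inversion (l : List ℕ) (h : ¬ l.Chain' (· ≥ ·)) :
    ∃ u a b t, l = u ++ a :: b :: t ∧ a < b := by
  induction l with
  | nil => exact absurd List.isChain_nil h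
  | cons a l ih =>
    cases l with
    | nil => exact absurd (List.isChain_singleton a) h
    | cons b t =>
      rw [show List.Chain' (· ≥ ·) (a :: b :: t) ↔ _ from List.isChain_cons_cons] at h
      by_cases hab : b ≤ a
      · have hc : ¬ (b :: t).Chain' (· ≥ ·) := fun hc => h ⟨hab, hc⟩
        obtain ⟨u, x, y, t', ht, hxy⟩ := ih hc
        exact ⟨a :: u, x, y, t', by rw [List.cons_append, ht], hxy⟩
      · exact ⟨[], a, b, t, rfl, Nat.lt_of_not_le hab⟩

lemma bas_eq_applyList {c h : ℂ} (Vm : VirVerma M c h) (i : VirIdx) :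
    Vm.bas i = applyList Vm.toVirRep i.1.1 ((fun x => Vm.L (-1) x)^[i.2] Vm.hw) := by
  rw [Vm.bas_eq]; rfl

lemma reorder {c h : ℂ} (Vm : VirVerma M c h) (q : ℕ) :
    ∀ (k : ℕ) (l : List ℕ), mu l ≤ k → (∀ a ∈ l, 2 ≤ a) →
    applyList Vm.toVirRep l ((fun x => Vm.L (-1) x)^[q] Vm.hw) ∈
      Submodule.span ℂ {x : M | ∃ i : VirIdx, i.2 = q ∧ x = Vm.bas i} := by
  intro k
  induction k using Nat.strong_induction_on with
  | _ k ih =>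
  intro l hmu hl
  by_cases hc : l.Chain' (· ≥ ·)
  · apply Submodule.subset_span
    exact ⟨(⟨l, hc, hl⟩, q), rfl, (bas_eq_applyList Vm (⟨l, hc, hl⟩, q)).symm⟩
  · obtain ⟨u, a, b, t, rfl, hab⟩ := exists_inversion l hc
    have ha2 : 2 ≤ a := hl a (by simp)
    have hb2 : 2 ≤ b := hl b (by simp)
    set v := (fun x => Vm.L (-1) x)^[q] Vm.hw with hv
    have key : applyList Vm.toVirRep (a :: b :: t) v =
        applyList Vm.toVirRep (b :: a :: t) v +
          (((b : ℤ) - (a : ℤ) : ℤ) : ℂ) • applyList Vm.toVirRep ((a + b) :: t) v := by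
      have hcm := Vm.comm (-(a : ℤ)) (-(b : ℤ)) (applyList Vm.toVirRep t v)
      rw [if_neg (by omega)] at hcm
      rw [zero_smul, add_zero] at hcm
      have h1 : (-(a : ℤ)) + (-(b : ℤ)) = -((a + b : ℕ) : ℤ) := by push_cast; ring
      have h2 : ((-(a : ℤ) - (-(b : ℤ)) : ℤ) : ℂ) = (((b : ℤ) - (a : ℤ) : ℤ) : ℂ) := by
        push_cast; ring
      rw [h1, h2] at hcm
      simp only [applyList_cons]
      rw [← hcm]
      abel
    have hs1 : (b :: a :: t).sum = (a :: b :: t).sum := by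
      simp only [List.sum_cons]; omega
    have hs2 : ((a + b) :: t).sum = (a :: b :: t).sum := by
      simp only [List.sum_cons]; omega
    have key1 : mu (u ++ b :: a :: t) < mu (u ++ a :: b :: t) := by
      rw [mu_append, mu_append, hs1]
      have hlt : mu (b :: a :: t) < mu (a :: b :: t) := by
        simp only [mu, List.sum_cons]; omega
      exact Nat.add_lt_add_left hlt _
    have key2 : mu (u ++ (a + b) :: t) < mu (u ++ a :: b :: t) := by
      rw [mu_append, mu_append, hs2]
      have hlt : mu ((a + b) :: t) < mu (a :: b :: t) := by
        simp only [mu, List.sum_cons]; omega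
      exact Nat.add_lt_add_left hlt _
    have hl1 : ∀ x ∈ u ++ b :: a :: t, 2 ≤ x := by
      intro x hx
      apply hl
      simp only [List.mem_append, List.mem_cons] at hx ⊢
      tauto
    have hl2 : ∀ x ∈ u ++ (a + b) :: t, 2 ≤ x := by
      intro x hx
      simp only [List.mem_append, List.mem_cons] at hx
      rcases hx with hx | hx | hx
      · exact hl x (List.mem_append_left _ hx)
      · omega
      · exact hl x (List.mem_append_right _ (List.mem_cons_of_mem a (List.mem_cons_of_mem b hx)))
    rw [applyList_append, key, applyList_add, applyList_smul, ← applyList_append,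
      ← applyList_append]
    exact Submodule.add_mem _
      (ih (mu (u ++ b :: a :: t)) (lt_of_lt_of_le key1 hmu) _ le_rfl hl1)
      (Submodule.smul_mem _ _
        (ih (mu (u ++ (a + b) :: t)) (lt_of_lt_of_le key2 hmu) _ le_rfl hl2))



lemma virGen_invariant (R : VirRep M) (s : Set M) : VirInvariant R (VirGen R s) := by
  intro n x hx
  rw [VirGen, Submodule.mem_sInf] at hx ⊢
  intro U hU
  exact hU.1 n x (hx U hU)

lemma W1_invariant {c h : ℂ} (Vm : VirVerma M c h) (N : ℕ)
    (m : ℤ) (hm : 2 ≤ m) (x : M)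
    (hx : x ∈ Submodule.span ℂ {x : M | ∃ i : VirIdx, i.2 < N ∧ x = Vm.bas i}) :
    Vm.L (-m) x ∈ Submodule.span ℂ {x : M | ∃ i : VirIdx, i.2 < N ∧ x = Vm.bas i} := by
  induction hx using Submodule.span_induction with
  | mem x hx =>
    obtain ⟨i, hiN, rfl⟩ := hx
    have hmnat : -m = -((m.toNat : ℕ) : ℤ) := by omega
    have hmem : Vm.L (-m) (Vm.bas i) ∈
        Submodule.span ℂ {x : M | ∃ j : VirIdx, j.2 = i.2 ∧ x = Vm.bas j} := by
      rw [bas_eq_applyList Vm i, hmnat, ← applyList_cons]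
      refine reorder Vm i.2 (mu (m.toNat :: i.1.1)) _ le_rfl ?_
      intro a ha
      rcases List.mem_cons.mp ha with rfl | ha
      · omega
      · exact i.1.2.2 a ha
    refine Submodule.span_mono ?_ hmem
    rintro y ⟨j, hj, rfl⟩
    exact ⟨j, hj ▸ hiN, rfl⟩
  | zero => rw [(Vm.L_linear (-m)).map_zero]; exact Submodule.zero_mem _
  | add y z _ _ hy hz =>
    rw [(Vm.L_linear (-m)).map_add]; exact Submodule.add_mem _ hy hz
  | smul a y _ hy =>
    rw [(Vm.L_linear (-m)).map_smul]; exact Submodule.smul_mem _ a hy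

lemma proj_eq {W2 W1 : Submodule ℂ M} (hc : IsCompl W2 W1) (y z : M)
    (hy : y ∈ W2) (hz : z ∈ W1) :
    (W2.subtype ∘ₗ Submodule.linearProjOfIsCompl W2 W1 hc) (y + z) = y := by
  have h1 : Submodule.linearProjOfIsCompl W2 W1 hc y = ⟨y, hy⟩ :=
    Submodule.linearProjOfIsCompl_apply_left hc ⟨y, hy⟩
  have h2 : Submodule.linearProjOfIsCompl W2 W1 hc z = 0 :=
    Submodule.projectionOnto_apply_of_mem_right hc hz
  simp [map_add, h1, h2]

end VirAux

/-- Proposition 5.8 of the paper.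
Let `W = M(c,h)` be a Virasoro Verma module in a Feigin–Fuchs block of type (a), (b)
or (c) (so every proper nonzero submodule is generated by a single singular vector),
let `W₂ = M(c,h₁)` be the submodule generated by a singular vector `s` of level `N`
whose standard expression has coefficient `1` of `L(-1)^N`, let
`W₁ = span{L(-n₁)⋯L(-n_s)L(-1)^n 𝟙 : n < N}` and `π_{W₂} : W → W₂` the projection
along `W₁`.  Then for every `w ∈ W` and every integer `m ≥ 2`,
`π_{W₂}(L(-m)w) = L(-m) π_{W₂}(w)`. -/
theorem projection_commutes_with_negative_modes
    {M : Type} [AddCommGroup M] [Module ℂ M] (c h : ℂ) (Vm : VirVerma M c h)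
    -- the block condition: every proper nonzero submodule is generated by one singular vector
    (hblock : ∀ U : Submodule ℂ M, VirInvariant Vm.toVirRep U → U ≠ ⊥ → U ≠ ⊤ →
      ∃ t : M, IsSingular Vm.toVirRep t ∧ U = VirGen Vm.toVirRep {t})
    -- the singular vector `s` of level `N`, normalized so that `L(-1)^N` has coefficient `1`
    (N : ℕ) (hN : 1 ≤ N) (s : M)
    (hsing : IsSingular Vm.toVirRep s)
    (hlev : ∀ i ∈ (Vm.bas.repr s).support, VirIdx.level i = N)
    (hnorm : Vm.bas.repr s (VirIdx.pure N) = 1)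
    -- the submodule `W₂` generated by `s`, the complement `W₁`, and the projection
    (W2 : Submodule ℂ M) (hW2 : W2 = VirGen Vm.toVirRep {s})
    (W1 : Submodule ℂ M)
    (hW1 : W1 = Submodule.span ℂ {x : M | ∃ i : VirIdx, i.2 < N ∧ x = Vm.bas i})
    (hcompl : IsCompl W2 W1) :
    ∀ (w : M) (m : ℤ), 2 ≤ m →
      (W2.subtype ∘ₗ Submodule.linearProjOfIsCompl W2 W1 hcompl) (Vm.L (-m) w) =
        Vm.L (-m) ((W2.subtype ∘ₗ Submodule.linearProjOfIsCompl W2 W1 hcompl) w) := by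

  intro w m hm
  obtain ⟨y, z, hy, hz, rfl⟩ : ∃ y z, y ∈ W2 ∧ z ∈ W1 ∧ w = y + z := by
    have hself := Submodule.projection_add_projection_eq_self hcompl w
    exact ⟨_, _, (Submodule.linearProjOfIsCompl W2 W1 hcompl w).2,
      (Submodule.linearProjOfIsCompl W1 W2 hcompl.symm w).2, hself.symm⟩
  have hLy : Vm.L (-m) y ∈ W2 := by
    rw [hW2] at hy ⊢
    exact VirAux.virGen_invariant _ _ _ _ hy
  have hLz : Vm.L (-m) z ∈ W1 := by
    rw [hW1] at hz ⊢
    exact VirAux.W1_invariant Vm N m hm z hz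
  rw [(Vm.L_linear (-m)).map_add, VirAux.proj_eq hcompl _ _ hLy hLz,
    VirAux.proj_eq hcompl y z hy hz]
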